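/- A pregeometry cl on X is locally modular (i.e. dim(A ∪ B) + dim(A ∩ B) = dim(A) + dim(B) for all finite-dimensional closed sets A, B with dim(A ∩ B) > 0) if and only if for every a ∈ X \ cl(∅) the localisation cl_{a} (defined by cl_{a}(A) = cl(A ∪ {a})) is modular. -/

import Mathlib

universe u

def IsPregeometry {X : Type u} (cl : Set X → Set X) : Prop :=
  (∀ A, A ⊆ cl A) ∧
  (∀ A B : Set X, A ⊆ B → cl A ⊆ cl B) ∧
  (∀ A, cl (cl A) = cl A) ∧
  (∀ (A : Set X) (a : X), a ∈ cl A → ∃ A₀, A₀ ⊆ A ∧ A₀.Finite ∧ a ∈ cl A₀) ∧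
  (∀ (A : Set X) (a b : X), a ∈ cl (A ∪ {b}) → a ∉ cl A → b ∈ cl (A ∪ {a}))

def Indep {X : Type u} (cl : Set X → Set X) (B : Set X) : Prop :=
  ∀ a ∈ B, a ∉ cl (B \ {a})

def IsBasisOf {X : Type u} (cl : Set X → Set X) (B Y : Set X) : Prop :=
  B ⊆ Y ∧ Y ⊆ cl B ∧ Indep cl B

def HasDim {X : Type u} (cl : Set X → Set X) (Y : Set X) (n : ℕ) : Prop :=
  ∃ B : Finset X, IsBasisOf cl ↑B Y ∧ B.card = n

def IsClosedSet {X : Type u} (cl : Set X → Set X) (A : Set X) : Prop := cl A = A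

def IsModular {X : Type u} (cl : Set X → Set X) : Prop :=
  ∀ (A B : Set X) (m n p q : ℕ), IsClosedSet cl A → IsClosedSet cl B →
    HasDim cl A m → HasDim cl B n → HasDim cl (A ∪ B) p → HasDim cl (A ∩ B) q →
    p + q = m + n

def IsLocallyModular {X : Type u} (cl : Set X → Set X) : Prop :=
  ∀ (A B : Set X) (m n p q : ℕ), IsClosedSet cl A → IsClosedSet cl B →
    HasDim cl A m → HasDim cl B n → HasDim cl (A ∪ B) p → HasDim cl (A ∩ B) q →
    0 < q → p + q = m + n

def InfiniteDim {X : Type u} (cl : Set X → Set X) : Prop :=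
  ∀ A : Finset X, cl ↑A ≠ Set.univ

def AutInvariant {G : Type u} [Group G] (cl : Set G → Set G) : Prop :=
  ∀ (f : G ≃* G) (A : Set G), (⇑f) '' cl A = cl ((⇑f) '' A)

def Homogeneous {G : Type u} [Group G] (cl : Set G → Set G) : Prop :=
  InfiniteDim cl ∧
  ∀ (A : Finset G) (b c : G), b ∉ cl ↑A → c ∉ cl ↑A →
    ∃ f : G ≃* G, (∀ a ∈ A, f a = a) ∧ f b = c

variable {X : Type u} [DecidableEq X] {cl : Set X → Set X}

lemma indep_mono (hP : IsPregeometry cl) {B B' : Set X} (hsub : B' ⊆ B)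
    (hB : Indep cl B) : Indep cl B' := by
  intro a ha h
  exact hB a (hsub ha) (hP.2.1 _ _ (Set.diff_subset_diff_left hsub) h)

lemma steinitz_aux (hP : IsPregeometry cl) :
    ∀ k (I J : Finset X), (I \ J).card = k → Indep cl ↑I → ↑I ⊆ cl ↑J →
      I.card ≤ J.card := by
  intro k
  induction k using Nat.strong_induction_on with
  | _ k ih =>
    intro I J hk hI hIJ
    rcases Nat.eq_zero_or_pos k with h0 | hpos
    · subst h0
      have : I ⊆ J := by
        intro x hx
        by_contra hxJ
        have : x ∈ I \ J := Finset.mem_sdiff.2 ⟨hx, hxJ⟩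
        simpa [Finset.card_eq_zero.1 hk] using this
      exact Finset.card_le_card this
    · obtain ⟨x, hx⟩ : ∃ x, x ∈ I \ J := Finset.card_pos.1 (hk ▸ hpos)
      obtain ⟨hxI, hxJ⟩ := Finset.mem_sdiff.1 hx
      set I' := I.erase x with hI'
      have hcoeI' : (↑I' : Set X) = ↑I \ {x} := by simp [hI']
      have hxclI' : x ∉ cl ↑I' := by rw [hcoeI']; exact hI x hxI
      -- find y ∈ J, y ∉ cl I', y ∉ I
      have hy : ∃ y ∈ J, y ∉ cl ↑I' := by
        by_contra h
        push_neg at h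
        have hJsub : (↑J : Set X) ⊆ cl ↑I' := fun y hy => h y hy
        have : x ∈ cl ↑I' := by
          have := hIJ (Finset.mem_coe.2 hxI)
          have h2 : cl ↑J ⊆ cl (cl ↑I') := hP.2.1 _ _ hJsub
          rw [hP.2.2.1] at h2
          exact h2 this
        exact hxclI' this
      obtain ⟨y, hyJ, hyclI'⟩ := hy
      have hyx : y ≠ x := fun h => hxJ (h ▸ hyJ)
      have hyI' : y ∉ I' := fun h => hyclI' (hP.1 _ (Finset.mem_coe.2 h))
      set K := insert y I' with hK
      have hcoeK : (↑K : Set X) = insert y ↑I' := by simp [hK]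
      have hKindep : Indep cl ↑K := by
        intro z hz hzcl
        rw [hcoeK] at hz
        rcases hz with rfl | hz
        · have : (insert z ↑I' : Set X) \ {z} = ↑I' := by
            rw [Set.insert_diff_of_mem _ (Set.mem_singleton z)]
            exact Set.diff_singleton_eq_self hyI'
          rw [hcoeK, this] at hzcl
          exact hyclI' hzcl
        · have hzy : z ≠ y := fun h => hyI' (h ▸ hz)
          have hset : (↑K : Set X) \ {z} = (↑I' \ {z}) ∪ {y} := by
            rw [hcoeK]
            ext w
            simp only [Set.mem_diff, Set.mem_insert_iff, Set.mem_union,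
              Set.mem_singleton_iff]
            constructor
            · rintro ⟨rfl | hw, hwz⟩
              · exact Or.inr rfl
              · exact Or.inl ⟨hw, hwz⟩
            · rintro (⟨hw, hwz⟩ | rfl)
              · exact ⟨Or.inr hw, hwz⟩
              · exact ⟨Or.inl rfl, fun h => hzy h.symm⟩
          rw [hset] at hzcl
          have hznot : z ∉ cl (↑I' \ {z}) := by
            intro h
            apply hI z (Finset.mem_of_mem_erase hz)
            exact hP.2.1 _ _ (Set.diff_subset_diff_left (by rw [hcoeI']; exact Set.diff_subset)) h
          have := hP.2.2.2.2 _ z y hzcl hznot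
          have heq : (↑I' \ {z} : Set X) ∪ {z} = ↑I' := by
            rw [Set.diff_union_self, Set.union_singleton,
              Set.insert_eq_self.2 hz]
          rw [heq] at this
          exact hyclI' this
      have hKJ : (↑K : Set X) ⊆ cl ↑J := by
        rw [hcoeK]
        intro w hw
        rcases hw with rfl | hw
        · exact hP.1 _ (Finset.mem_coe.2 hyJ)
        · exact hIJ (by rw [hcoeI'] at hw; exact hw.1)
      have hKsd : (K \ J).card = k - 1 := by
        have : K \ J = (I \ J).erase x := by
          ext w
          simp only [hK, Finset.mem_sdiff, Finset.mem_insert, Finset.mem_erase,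
            hI', Finset.mem_erase]
          constructor
          · rintro ⟨rfl | ⟨hwx, hwI⟩, hwJ⟩
            · exact absurd hyJ hwJ
            · exact ⟨hwx, hwI, hwJ⟩
          · rintro ⟨hwx, hwI, hwJ⟩
            exact ⟨Or.inr ⟨hwx, hwI⟩, hwJ⟩
        rw [this, Finset.card_erase_of_mem hx, hk]
      have hKcard : K.card = I.card := by
        rw [hK, Finset.card_insert_of_notMem hyI', hI',
          Finset.card_erase_of_mem hxI]
        have : 0 < I.card := Finset.card_pos.2 ⟨x, hxI⟩
        omega
      have := ih (k-1) (by omega) K J hKsd hKindep hKJ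
      omega

lemma basis_card_eq (hP : IsPregeometry cl) {B C : Finset X} {Y : Set X}
    (hB : IsBasisOf cl ↑B Y) (hC : IsBasisOf cl ↑C Y) : B.card = C.card := by
  have h1 := steinitz_aux hP _ B C rfl hB.2.2 (hB.1.trans hC.2.1)
  have h2 := steinitz_aux hP _ C B rfl hC.2.2 (hC.1.trans hB.2.1)
  omega

lemma extract_basis (hP : IsPregeometry cl) :
    ∀ k (S : Finset X) (Y : Set X), S.card = k → ↑S ⊆ Y → Y ⊆ cl ↑S →
      ∃ B : Finset X, B ⊆ S ∧ IsBasisOf cl ↑B Y := by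
  intro k
  induction k using Nat.strong_induction_on with
  | _ k ih =>
    intro S Y hk hSY hYS
    by_cases hind : Indep cl ↑S
    · exact ⟨S, Finset.Subset.refl S, hSY, hYS, hind⟩
    · simp only [Indep, not_forall] at hind
      obtain ⟨s, hsS, hscl⟩ := hind
      rw [not_not] at hscl
      have hsS' : s ∈ S := hsS
      have hcoe : (↑(S.erase s) : Set X) = ↑S \ {s} := by simp
      have hsub : cl ↑S ⊆ cl ↑(S.erase s) := by
        have h1 : (↑S : Set X) ⊆ cl ↑(S.erase s) := by
          intro w hw
          by_cases hws : w = s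
          · subst hws; rw [hcoe]; exact hscl
          · exact hP.1 _ (by rw [hcoe]; exact ⟨hw, hws⟩)
        have := hP.2.1 _ _ h1
        rwa [hP.2.2.1] at this
      have hcard : (S.erase s).card = k - 1 := by
        rw [Finset.card_erase_of_mem hsS', hk]
      have hkpos : 0 < k := hk ▸ Finset.card_pos.2 ⟨s, hsS'⟩
      obtain ⟨B, hBsub, hB⟩ := ih (k-1) (by omega) (S.erase s) Y hcard
        (fun w hw => hSY (by rw [hcoe] at hw; exact hw.1)) (hYS.trans hsub)
      exact ⟨B, hBsub.trans (Finset.erase_subset s S), hB⟩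

lemma loc_pregeometry (hP : IsPregeometry cl) (a : X) :
    IsPregeometry (fun A => cl (A ∪ {a})) := by
  refine ⟨?_, ?_, ?_, ?_, ?_⟩
  · intro A x hx
    exact hP.1 _ (Or.inl hx)
  · intro A B hAB
    exact hP.2.1 _ _ (Set.union_subset_union_left _ hAB)
  · intro A
    simp only
    have h1 : cl (A ∪ {a}) ∪ {a} = cl (A ∪ {a}) := by
      apply Set.union_eq_self_of_subset_right
      exact Set.singleton_subset_iff.2 (hP.1 _ (Or.inr rfl))
    rw [h1, hP.2.2.1]
  · intro A x hx
    obtain ⟨A₀, hA₀sub, hA₀fin, hxA₀⟩ := hP.2.2.2.1 _ _ hx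
    refine ⟨A₀ \ {a}, ?_, hA₀fin.diff, ?_⟩
    · intro w hw
      rcases hA₀sub hw.1 with h | h
      · exact h
      · exact absurd h hw.2
    · exact hP.2.1 _ _ (fun w hw => by
        by_cases hwa : w = a
        · exact Or.inr hwa
        · exact Or.inl ⟨hw, hwa⟩) hxA₀
  · intro A x b hx hxA
    simp only at *
    have h1 : A ∪ {b} ∪ {a} = A ∪ {a} ∪ {b} := by
      rw [Set.union_right_comm]
    rw [h1] at hx
    have := hP.2.2.2.2 _ x b hx hxA
    have h2 : A ∪ {a} ∪ {x} = A ∪ {x} ∪ {a} := by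
      rw [Set.union_right_comm]
    rwa [h2] at this

lemma not_mem_cl_of_loc_indep (hP : IsPregeometry cl) {a : X} (ha : a ∉ cl ∅) :
    ∀ k (B : Finset X), B.card = k → Indep (fun A => cl (A ∪ {a})) ↑B →
      a ∉ cl ↑B := by
  intro k
  induction k using Nat.strong_induction_on with
  | _ k ih =>
    intro B hk hB hacl
    rcases Nat.eq_zero_or_pos k with h0 | hpos
    · subst h0
      rw [Finset.card_eq_zero.1 hk] at hacl
      exact ha (by simpa using hacl)
    · obtain ⟨b, hb⟩ : ∃ b, b ∈ B := Finset.card_pos.1 (hk ▸ hpos)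
      have hcoe : (↑(B.erase b) : Set X) = ↑B \ {b} := by simp
      by_cases hcase : a ∈ cl ↑(B.erase b)
      · exact ih (k-1) (by omega) (B.erase b)
          (by rw [Finset.card_erase_of_mem hb, hk])
          (indep_mono (loc_pregeometry hP a) (by rw [hcoe]; exact Set.diff_subset) hB)
          hcase
      · have hBeq : (↑(B.erase b) : Set X) ∪ {b} = ↑B := by
          rw [hcoe, Set.diff_union_self, Set.union_singleton,
            Set.insert_eq_self.2 (Finset.mem_coe.2 hb)]
        have := hP.2.2.2.2 _ a b (by rw [hBeq]; exact hacl) hcase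
        refine hB b (Finset.mem_coe.2 hb) ?_
        show b ∈ cl ((↑B \ {b}) ∪ {a})
        rw [← hcoe]
        exact this

lemma basis_shift (hP : IsPregeometry cl) {a : X} (ha : a ∉ cl ∅) {B : Finset X}
    {S : Set X} (haS : a ∈ S) (hB : IsBasisOf (fun A => cl (A ∪ {a})) ↑B S) :
    a ∉ B ∧ IsBasisOf cl ↑(insert a B) S := by
  have haB : a ∉ B := by
    intro h
    exact not_mem_cl_of_loc_indep hP ha _ B rfl hB.2.2 (hP.1 _ (Finset.mem_coe.2 h))
  have hcoe : (↑(insert a B) : Set X) = ↑B ∪ {a} := by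
    rw [Finset.coe_insert, Set.union_singleton]
  refine ⟨haB, ?_, ?_, ?_⟩
  · rw [hcoe]
    intro w hw
    rcases hw with hw | rfl
    · exact hB.1 hw
    · exact haS
  · rw [hcoe]; exact hB.2.1
  · intro x hx hxcl
    rw [hcoe] at hx
    rcases hx with hx | rfl
    · have hxa : x ≠ a := fun h => haB (h ▸ hx)
      have hset : (↑(insert a B) : Set X) \ {x} = (↑B \ {x}) ∪ {a} := by
        rw [hcoe]
        ext w
        simp only [Set.mem_diff, Set.mem_union, Set.mem_singleton_iff]
        constructor
        · rintro ⟨hw | rfl, hwx⟩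
          · exact Or.inl ⟨hw, hwx⟩
          · exact Or.inr rfl
        · rintro (⟨hw, hwx⟩ | rfl)
          · exact ⟨Or.inl hw, hwx⟩
          · exact ⟨Or.inr rfl, fun h => hxa h.symm⟩
      rw [hset] at hxcl
      exact hB.2.2 x hx hxcl
    · have hset : (↑(insert x B) : Set X) \ {x} = ↑B := by
        rw [hcoe]
        ext w
        simp only [Set.mem_diff, Set.mem_union, Set.mem_singleton_iff]
        constructor
        · rintro ⟨hw | rfl, hwx⟩
          · exact hw
          · exact absurd rfl hwx
        · intro hw
          exact ⟨Or.inl hw, fun h => haB (h ▸ hw)⟩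
      rw [hset] at hxcl
      exact not_mem_cl_of_loc_indep hP ha _ B rfl hB.2.2 hxcl

lemma hasdim_shift_up (hP : IsPregeometry cl) {a : X} (ha : a ∉ cl ∅) {S : Set X}
    (haS : a ∈ S) {q : ℕ} (hq : HasDim (fun A => cl (A ∪ {a})) S q) :
    HasDim cl S (q + 1) := by
  obtain ⟨B, hB, hcard⟩ := hq
  obtain ⟨haB, hbasis⟩ := basis_shift hP ha haS hB
  exact ⟨insert a B, hbasis, by rw [Finset.card_insert_of_notMem haB, hcard]⟩

lemma hasdim_shift_down (hP : IsPregeometry cl) {a : X} (ha : a ∉ cl ∅) {S : Set X}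
    (haS : a ∈ S) {m : ℕ} (hm : HasDim cl S m) :
    ∃ q, q + 1 = m ∧ HasDim (fun A => cl (A ∪ {a})) S q := by
  obtain ⟨B, hB, hcard⟩ := hm
  have hspan : S ⊆ cl (↑B ∪ {a}) :=
    hB.2.1.trans (hP.2.1 _ _ Set.subset_union_left)
  obtain ⟨B', hB'sub, hB'⟩ := extract_basis (loc_pregeometry hP a) _ B S rfl hB.1 hspan
  obtain ⟨haB', hbasis⟩ := basis_shift hP ha haS hB'
  have hcardeq : (insert a B').card = B.card := basis_card_eq hP hbasis hB
  rw [Finset.card_insert_of_notMem haB'] at hcardeq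
  exact ⟨B'.card, by omega, ⟨B', hB', rfl⟩⟩

lemma loc_mem {a : X} (hP : IsPregeometry cl) {S : Set X}
    (hS : IsClosedSet (fun A => cl (A ∪ {a})) S) : a ∈ S ∧ IsClosedSet cl S := by
  have haS : a ∈ S := by
    rw [← hS]
    exact hP.1 _ (Or.inr rfl)
  refine ⟨haS, ?_⟩
  have h1 : cl S ⊆ cl (S ∪ {a}) := hP.2.1 _ _ Set.subset_union_left
  rw [show cl (S ∪ {a}) = S from hS] at h1
  exact Set.Subset.antisymm h1 (hP.1 S)

theorem stmt4 {X : Type u} (cl : Set X → Set X) (hP : IsPregeometry cl) :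
    IsLocallyModular cl ↔ ∀ a : X, a ∉ cl ∅ → IsModular (fun A => cl (A ∪ {a})) := by
  classical
  constructor
  · intro hLM a ha A B m n p q hA hB hm hn hp hq
    obtain ⟨haA, hAcl⟩ := loc_mem hP hA
    obtain ⟨haB, hBcl⟩ := loc_mem hP hB
    have haU : a ∈ A ∪ B := Or.inl haA
    have haI : a ∈ A ∩ B := ⟨haA, haB⟩
    have := hLM A B (m+1) (n+1) (p+1) (q+1) hAcl hBcl
      (hasdim_shift_up hP ha haA hm) (hasdim_shift_up hP ha haB hn)
      (hasdim_shift_up hP ha haU hp) (hasdim_shift_up hP ha haI hq)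
      (by omega)
    omega
  · intro h A B m n p q hAcl hBcl hm hn hp hq hq0
    obtain ⟨C, hC, hCcard⟩ := hq
    obtain ⟨a, haC⟩ : ∃ a, a ∈ C := Finset.card_pos.1 (hCcard ▸ hq0)
    have haI : a ∈ A ∩ B := hC.1 (Finset.mem_coe.2 haC)
    have ha : a ∉ cl ∅ := by
      intro hacl
      exact hC.2.2 a (Finset.mem_coe.2 haC)
        (hP.2.1 _ _ (Set.empty_subset _) hacl)
    have hclA : IsClosedSet (fun A => cl (A ∪ {a})) A := by
      show cl (A ∪ {a}) = A
      rw [Set.union_eq_self_of_subset_right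
        (Set.singleton_subset_iff.2 haI.1)]
      exact hAcl
    have hclB : IsClosedSet (fun A => cl (A ∪ {a})) B := by
      show cl (B ∪ {a}) = B
      rw [Set.union_eq_self_of_subset_right
        (Set.singleton_subset_iff.2 haI.2)]
      exact hBcl
    obtain ⟨m', hm'1, hm'⟩ := hasdim_shift_down hP ha haI.1 hm
    obtain ⟨n', hn'1, hn'⟩ := hasdim_shift_down hP ha haI.2 hn
    obtain ⟨p', hp'1, hp'⟩ := hasdim_shift_down hP ha (Or.inl haI.1 : a ∈ A ∪ B) hp
    obtain ⟨q', hq'1, hq'⟩ := hasdim_shift_down hP ha haI ⟨C, hC, hCcard⟩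
    have := h a ha A B m' n' p' q' hclA hclB hm' hn' hp' hq'
    omega
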